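/- For every term p of the process algebra MPA and every pointed modal transition system (N,j): (⟦p⟧, p) ⪯ (N,j) if and only if (N,j) ⊨ᵃ φ_p, where φ_p is the characteristic Hennessy–Milner logic formula of p. -/
import Mathlib


/-- A mixed transition system over event set `Act` with state set `σ`:
two transition relations `Ra` (asserted/must) and `Rc` (consistent/may). -/
structure MTS (Act σ : Type) where
  Ra : σ → Act → σ → Prop
  Rc : σ → Act → σ → Prop

namespace MTS

/-- `M` is a modal transition system iff `Ra ⊆ Rc`. -/
def IsModal {Act σ : Type} (M : MTS Act σ) : Prop :=
  ∀ s α t, M.Ra s α t → M.Rc s α t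

/-- `M` is image-finite. -/
def ImageFinite {Act σ : Type} (M : MTS Act σ) : Prop :=
  ∀ (s : σ) (α : Act), {t | M.Ra s α t}.Finite ∧ {t | M.Rc s α t}.Finite

end MTS

/-- A labelled transition system viewed as a mixed transition system `(Σ, R, R)`. -/
def LTS {Act σ : Type} (R : σ → Act → σ → Prop) : MTS Act σ := ⟨R, R⟩

/-- `Q` is a refinement from `M` to `N`. -/
def IsRefinement {Act σ τ : Type} (M : MTS Act σ) (N : MTS Act τ) (Q : σ → τ → Prop) : Prop :=
  ∀ s t, Q s t → ∀ α : Act,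
    (∀ s', M.Ra s α s' → ∃ t', N.Ra t α t' ∧ Q s' t') ∧
    (∀ t', N.Rc t α t' → ∃ s', M.Rc s α s' ∧ Q s' t')

/-- `(M,i) ⪯ (N,j)`: the pointed system `(N,j)` refines `(M,i)`. -/
def Refines {Act σ τ : Type} (M : MTS Act σ) (i : σ) (N : MTS Act τ) (j : τ) : Prop :=
  ∃ Q, IsRefinement M N Q ∧ Q i j

/-- Modes for the two judgments of the semantics: `a` (asserted), `c` (consistent). -/
inductive RMode where
  | a | c

/-- The dual mode: `¬a = c` and `¬c = a`. -/
def RMode.negm : RMode → RMode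
  | .a => .c
  | .c => .a

/-- The transition relation of mode `m`. -/
def MTS.R {Act σ : Type} (M : MTS Act σ) : RMode → σ → Act → σ → Prop
  | .a => M.Ra
  | .c => M.Rc

/-- Formulas of Hennessy–Milner logic over `Act`. -/
inductive HML (Act : Type) where
  | tt
  | neg (φ : HML Act)
  | dia (α : Act) (φ : HML Act)
  | and (φ ψ : HML Act)

/-- Larsen's semantics of Hennessy–Milner logic with two judgments `⊨ᵃ`, `⊨ᶜ`. -/
def Sat {Act σ : Type} (M : MTS Act σ) : HML Act → RMode → σ → Prop
  | .tt, _, _ => True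
  | .neg φ, m, s => ¬ Sat M φ m.negm s
  | .dia α φ, m, s => ∃ s', M.R m s α s' ∧ Sat M φ m s'
  | .and φ ψ, m, s => Sat M φ m s ∧ Sat M ψ m s

namespace HML

/-- `[α]φ = ¬⟨α⟩¬φ`. -/
def box {Act : Type} (α : Act) (φ : HML Act) : HML Act := .neg (.dia α (.neg φ))

/-- `φ ∨ ψ = ¬(¬φ ∧ ¬ψ)`. -/
def orf {Act : Type} (φ ψ : HML Act) : HML Act := .neg (.and (.neg φ) (.neg ψ))

/-- Finite conjunction (empty conjunction is `tt`). -/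
def bigAnd {Act : Type} : List (HML Act) → HML Act
  | [] => .tt
  | φ :: l => .and φ (bigAnd l)

/-- Finite disjunction (empty disjunction is `¬tt`). -/
def bigOr {Act : Type} : List (HML Act) → HML Act
  | [] => .neg .tt
  | φ :: l => orf φ (bigOr l)

/-- Modal depth of an HML formula. -/
def depth {Act : Type} : HML Act → ℕ
  | .tt => 0
  | .neg φ => φ.depth
  | .dia _ φ => 1 + φ.depth
  | .and φ ψ => max φ.depth ψ.depth

end HML

/-- Terms of the process algebra MPA. -/
inductive MPA (Act : Type) where
  | zero
  | bot
  | prefMust (α : Act) (p : MPA Act)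
  | prefMay (α : Act) (p : MPA Act)
  | plus (p q : MPA Act)

namespace MPA

variable {Act : Type} [DecidableEq Act]

/-- Must-successors of an MPA term for event `β` (structural operational semantics). -/
def must : MPA Act → Act → List (MPA Act)
  | .zero, _ => []
  | .bot, _ => []
  | .prefMust α p, β => if β = α then [p] else []
  | .prefMay _ _, _ => []
  | .plus p q, β => p.must β ++ q.must β

/-- All (must or may) successors of an MPA term for event `β`. -/
def may : MPA Act → Act → List (MPA Act)
  | .zero, _ => []
  | .bot, _ => [.bot]
  | .prefMust α p, β => if β = α then [p] else []
  | .prefMay α p, β => if β = α then [p] else []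
  | .plus p q, β => p.may β ++ q.may β

/-- The modal transition system `⟦·⟧` given by the structural operational semantics of MPA:
`Ra` is the set of must-transitions, `Rc` the set of all transitions. -/
def mts : MTS Act (MPA Act) :=
  ⟨fun p α q => q ∈ p.must α, fun p α q => q ∈ p.may α⟩

theorem sizeOf_lt_of_mem_must :
    ∀ (t : MPA Act) (α : Act) (r : MPA Act), r ∈ t.must α → sizeOf r < sizeOf t := by
  intro t
  induction t with
  | zero => intro α r h; simp [must] at h
  | bot => intro α r h; simp [must] at h
  | prefMust β p ih =>
      intro α r h
      simp only [must] at h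
      split at h <;> simp_all
  | prefMay β p ih => intro α r h; simp [must] at h
  | plus p q ihp ihq =>
      intro α r h
      simp only [must, List.mem_append] at h
      rcases h with h | h
      · have := ihp α r h; simp; omega
      · have := ihq α r h; simp; omega

theorem sizeOf_le_of_mem_may :
    ∀ (t : MPA Act) (α : Act) (r : MPA Act), r ∈ t.may α → sizeOf r ≤ sizeOf t := by
  intro t
  induction t with
  | zero => intro α r h; simp [may] at h
  | bot => intro α r h; simp [may] at h; simp [h]
  | prefMust β p ih =>
      intro α r h
      simp only [may] at h
      split at h <;> simp_all
  | prefMay β p ih =>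
      intro α r h
      simp only [may] at h
      split at h <;> simp_all
  | plus p q ihp ihq =>
      intro α r h
      simp only [may, List.mem_append] at h
      rcases h with h | h
      · have := ihp α r h; simp; omega
      · have := ihq α r h; simp; omega

theorem sizeOf_lt_plus_of_mem_may (p q : MPA Act) (α : Act) (r : MPA Act)
    (h : r ∈ (MPA.plus p q).may α) : sizeOf r < sizeOf (MPA.plus p q) := by
  simp only [may, List.mem_append] at h
  rcases h with h | h
  · have := sizeOf_le_of_mem_may p α r h; simp; omega
  · have := sizeOf_le_of_mem_may q α r h; simp; omega

end MPA

/-- The characteristic Hennessy–Milner formula `φ_p` of an MPA term `p`. -/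
noncomputable def charForm {Act : Type} [Fintype Act] [DecidableEq Act] : MPA Act → HML Act
  | .zero =>
      .bigAnd (((Finset.univ : Finset Act).toList).map fun α => .neg (.dia α .tt))
  | .bot => .tt
  | .prefMust α p =>
      .and (.dia α (charForm p)) (.and (HML.box α (charForm p))
        (.bigAnd ((((Finset.univ : Finset Act).toList).filter (fun β => β ≠ α)).map
          fun β => .neg (.dia β .tt))))
  | .prefMay α p =>
      .and (HML.box α (charForm p))
        (.bigAnd ((((Finset.univ : Finset Act).toList).filter (fun β => β ≠ α)).map
          fun β => .neg (.dia β .tt)))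
  | .plus p q =>
      .and
        (.bigAnd (((Finset.univ : Finset Act).toList).flatMap fun α =>
          ((MPA.plus p q).must α).attach.map fun r => HML.dia α (charForm r.1)))
        (.bigAnd (((Finset.univ : Finset Act).toList).map fun α =>
          HML.box α (.bigOr (((MPA.plus p q).may α).attach.map fun r => charForm r.1))))
decreasing_by
  all_goals first
    | exact MPA.sizeOf_lt_of_mem_must _ _ _ r.2
    | exact MPA.sizeOf_lt_plus_of_mem_may _ _ _ _ r.2
    | (simp; omega)
    | simp

/-- The formula `ψ_{w,α,p} = [δ₁]…[δₙ](⟨α⟩φ_p ∨ ¬⟨α⟩φ_p)`; the set `Φ` consists of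
all such formulas. -/
noncomputable def psiForm {Act : Type} [Fintype Act] [DecidableEq Act]
    (w : List Act) (α : Act) (p : MPA Act) : HML Act :=
  w.foldr (fun δ φ => HML.box δ φ)
    (HML.orf (.dia α (charForm p)) (.neg (.dia α (charForm p))))

/-- `Rᶜ`-reachability in a mixed transition system. -/
def MTS.ReachC {Act σ : Type} (M : MTS Act σ) : σ → σ → Prop :=
  Relation.ReflTransGen (fun s t => ∃ α, M.Rc s α t)
theorem RMode.negm_negm (m : RMode) : m.negm.negm = m := by cases m <;> rfl

theorem sat_bigAnd {Act σ : Type} (M : MTS Act σ) (l : List (HML Act)) (m : RMode) (s : σ) :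
    Sat M (HML.bigAnd l) m s ↔ ∀ φ ∈ l, Sat M φ m s := by
  induction l with
  | nil => simp [HML.bigAnd, Sat]
  | cons φ l ih => simp [HML.bigAnd, Sat, ih]

theorem sat_orf {Act σ : Type} (M : MTS Act σ) (φ ψ : HML Act) (m : RMode) (s : σ) :
    Sat M (HML.orf φ ψ) m s ↔ Sat M φ m s ∨ Sat M ψ m s := by
  simp only [HML.orf, Sat, RMode.negm_negm, not_and, not_not]
  tauto

theorem sat_bigOr {Act σ : Type} (M : MTS Act σ) (l : List (HML Act)) (m : RMode) (s : σ) :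
    Sat M (HML.bigOr l) m s ↔ ∃ φ ∈ l, Sat M φ m s := by
  induction l with
  | nil => simp [HML.bigOr, Sat]
  | cons φ l ih => simp [HML.bigOr, sat_orf, ih]

theorem sat_box {Act σ : Type} (M : MTS Act σ) (α : Act) (φ : HML Act) (m : RMode) (s : σ) :
    Sat M (HML.box α φ) m s ↔ ∀ t, M.R m.negm s α t → Sat M φ m t := by
  simp [HML.box, Sat, RMode.negm_negm]

theorem sat_and {Act σ : Type} (M : MTS Act σ) (φ ψ : HML Act) (m : RMode) (s : σ) :
    Sat M (.and φ ψ) m s ↔ Sat M φ m s ∧ Sat M ψ m s := Iff.rfl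

theorem sat_dia {Act σ : Type} (M : MTS Act σ) (α : Act) (φ : HML Act) (m : RMode) (s : σ) :
    Sat M (.dia α φ) m s ↔ ∃ t, M.R m s α t ∧ Sat M φ m t := Iff.rfl

theorem sat_negdia {Act σ : Type} (M : MTS Act σ) (β : Act) (s : σ) :
    Sat M (.neg (.dia β .tt)) .a s ↔ ∀ t, ¬ M.Rc s β t := by
  simp [Sat, MTS.R, RMode.negm]

theorem sat_charForm_iff {Act τ : Type} [Fintype Act] [DecidableEq Act]
    (N : MTS Act τ) (p : MPA Act) (j : τ) :
    Sat N (charForm p) .a j ↔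
      ((∀ α r, r ∈ p.must α → ∃ j', N.Ra j α j' ∧ Sat N (charForm r) .a j') ∧
       (∀ α j', N.Rc j α j' → ∃ r ∈ p.may α, Sat N (charForm r) .a j')) := by
  cases p with
  | zero =>
      rw [charForm]
      simp only [sat_bigAnd, List.mem_map, Finset.mem_toList, Finset.mem_univ, true_and,
        MPA.must, MPA.may, List.not_mem_nil, false_implies, forall_const, implies_true,
        true_and]
      constructor
      · intro h α j' hc
        have := h _ ⟨α, rfl⟩
        simp only [Sat, MTS.R, RMode.negm] at this
        exact absurd ⟨j', hc, trivial⟩ this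
      · rintro h φ ⟨α, rfl⟩
        simp only [Sat, MTS.R, RMode.negm, not_exists, not_and]
        intro j' hc _
        simp at h
        exact h α j' hc
  | bot =>
      rw [charForm]
      simp only [Sat, MPA.must, MPA.may, List.not_mem_nil, false_implies, implies_true,
        true_and, List.mem_singleton, true_iff]
      intro α j' _
      exact ⟨.bot, rfl, by rw [charForm]; trivial⟩
  | prefMust γ q =>
      rw [charForm]
      simp only [sat_and, sat_dia, sat_box, sat_bigAnd, sat_negdia, List.mem_map,
        List.mem_filter, Finset.mem_toList, Finset.mem_univ, true_and, MTS.R, RMode.negm,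
        MPA.must, MPA.may]
      constructor
      · rintro ⟨⟨j', hra, hsat⟩, hbox, hrest⟩
        refine ⟨?_, ?_⟩
        · intro α r hr
          split at hr
          · next h => subst h; simp at hr; subst hr; exact ⟨j', hra, hsat⟩
          · simp at hr
        · intro α j'' hc
          by_cases hαγ : α = γ
          · subst hαγ; simp only [if_pos rfl]
            exact ⟨q, List.mem_singleton.mpr rfl, hbox j'' hc⟩
          · exfalso
            have := hrest _ ⟨α, by simpa using hαγ, rfl⟩
            rw [sat_negdia] at this
            exact this j'' hc
      · rintro ⟨h1, h2⟩
        refine ⟨?_, ?_, ?_⟩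
        · exact h1 γ q (by simp)
        · intro j'' hc
          obtain ⟨r, hr, hs⟩ := h2 γ j'' hc
          simp at hr; subst hr; exact hs
        · rintro φ ⟨α, hne, rfl⟩
          rw [sat_negdia]
          intro j'' hc
          obtain ⟨r, hr, -⟩ := h2 α j'' hc
          simp only [if_neg (by simpa using hne)] at hr
          simp at hr
  | prefMay γ q =>
      rw [charForm]
      simp only [sat_and, sat_box, sat_bigAnd, sat_negdia, List.mem_map,
        List.mem_filter, Finset.mem_toList, Finset.mem_univ, true_and, MTS.R, RMode.negm,
        MPA.must, MPA.may]
      constructor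
      · rintro ⟨hbox, hrest⟩
        refine ⟨by intro α r hr; simp at hr, ?_⟩
        · intro α j'' hc
          by_cases hαγ : α = γ
          · subst hαγ; simp only [if_pos rfl]
            exact ⟨q, List.mem_singleton.mpr rfl, hbox j'' hc⟩
          · exfalso
            have := hrest _ ⟨α, by simpa using hαγ, rfl⟩
            rw [sat_negdia] at this
            exact this j'' hc
      · rintro ⟨-, h2⟩
        refine ⟨?_, ?_⟩
        · intro j'' hc
          obtain ⟨r, hr, hs⟩ := h2 γ j'' hc
          simp at hr; subst hr; exact hs
        · rintro φ ⟨α, hne, rfl⟩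
          rw [sat_negdia]
          intro j'' hc
          obtain ⟨r, hr, -⟩ := h2 α j'' hc
          simp only [if_neg (by simpa using hne)] at hr
          simp at hr
  | plus u v =>
      rw [charForm]
      simp only [sat_and, sat_bigAnd, List.mem_flatMap, List.mem_map,
        List.mem_attach, Finset.mem_toList, Finset.mem_univ, true_and]
      constructor
      · rintro ⟨h1, h2⟩
        refine ⟨?_, ?_⟩
        · intro α r hr
          have := h1 _ ⟨α, ⟨r, hr⟩, rfl⟩
          rw [sat_dia] at this
          simpa [MTS.R] using this
        · intro α j' hc
          have hb := h2 _ ⟨α, rfl⟩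
          rw [sat_box] at hb
          have := hb j' (by simpa [MTS.R, RMode.negm] using hc)
          rw [sat_bigOr] at this
          obtain ⟨φ, hφ, hs⟩ := this
          simp only [List.mem_map, List.mem_attach, true_and] at hφ
          obtain ⟨⟨r, hr⟩, rfl⟩ := hφ
          exact ⟨r, hr, hs⟩
      · rintro ⟨h1, h2⟩
        refine ⟨?_, ?_⟩
        · rintro φ ⟨α, ⟨r, hr⟩, rfl⟩
          rw [sat_dia]
          simpa [MTS.R] using h1 α r hr
        · rintro φ ⟨α, rfl⟩
          rw [sat_box]
          intro j' hc
          rw [sat_bigOr]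
          obtain ⟨r, hr, hs⟩ := h2 α j' (by simpa [MTS.R, RMode.negm] using hc)
          exact ⟨charForm r, List.mem_map.mpr ⟨⟨r, hr⟩, List.mem_attach _ _, rfl⟩, hs⟩

theorem MPA.may_cases {Act : Type} [DecidableEq Act] (p : MPA Act) (α : Act) (r : MPA Act)
    (h : r ∈ p.may α) : r = MPA.bot ∨ sizeOf r < sizeOf p := by
  cases p with
  | zero => simp [MPA.may] at h
  | bot => simp [MPA.may] at h; exact Or.inl h
  | prefMust β q =>
      right; simp only [MPA.may] at h; split at h <;> simp_all
  | prefMay β q =>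
      right; simp only [MPA.may] at h; split at h <;> simp_all
  | plus u v => exact Or.inr (MPA.sizeOf_lt_plus_of_mem_may u v α r h)

theorem sat_of_Q {Act τ : Type} [Fintype Act] [DecidableEq Act] (N : MTS Act τ)
    (Q : MPA Act → τ → Prop) (hQ : IsRefinement MPA.mts N Q) :
    ∀ n (p : MPA Act) (j : τ), sizeOf p ≤ n → Q p j → Sat N (charForm p) .a j := by
  intro n
  induction n with
  | zero =>
      intro p j h
      exfalso; cases p <;> simp at h <;> omega
  | succ n ih =>
      intro p j hsz hq
      rw [sat_charForm_iff]
      constructor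
      · intro α r hr
        obtain ⟨j', hra, hq'⟩ := (hQ p j hq α).1 r hr
        have hlt := MPA.sizeOf_lt_of_mem_must p α r hr
        exact ⟨j', hra, ih r j' (by omega) hq'⟩
      · intro α j' hc
        obtain ⟨r, hrm, hq'⟩ := (hQ p j hq α).2 j' hc
        have hrm' : r ∈ p.may α := hrm
        refine ⟨r, hrm', ?_⟩
        rcases MPA.may_cases p α r hrm' with rfl | hlt
        · rw [charForm]; trivial
        · exact ih r j' (by omega) hq'

/-- For every MPA term `p` and every pointed modal transition system
`(N,j)`: `(⟦p⟧, p) ⪯ (N,j)` iff `(N,j) ⊨ᵃ φ_p`. -/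
theorem refines_mpa_iff_sat_charForm {Act τ : Type} [Fintype Act] [DecidableEq Act]
    (p : MPA Act) (N : MTS Act τ) (hN : N.IsModal) (j : τ) :
    Refines MPA.mts p N j ↔ Sat N (charForm p) .a j := by
  constructor
  · rintro ⟨Q, hQ, hpj⟩
    exact sat_of_Q N Q hQ (sizeOf p) p j le_rfl hpj
  · intro hsat
    refine ⟨fun q t => Sat N (charForm q) .a t, ?_, hsat⟩
    intro s t hst α
    rw [sat_charForm_iff] at hst
    constructor
    · intro s' hmust
      exact hst.1 α s' hmust
    · intro t' hc
      obtain ⟨r, hr, hs⟩ := hst.2 α t' hc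
      exact ⟨r, hr, hs⟩
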